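/- Let g₁,…,gₘ be quasi-exponentials, i.e., each gᵢ(x) = αᵢˣ pᵢ(x) with αᵢ ∈ ℂ* and pᵢ a polynomial. Then the discrete Wronskian Wr(g₁,…,gₘ) is identically zero if and only if g₁,…,gₘ are linearly dependent over ℂ. -/

import Mathlib

/-- The discrete Wronskian of functions `g 0, …, g (m-1)`:
`dWr g x = det ((g i (x + j - 1))_{i,j})`. -/
noncomputable def dWr {m : ℕ} (g : Fin m → ℂ → ℂ) (x : ℂ) : ℂ :=
  Matrix.det (Matrix.of fun i j : Fin m => g i (x + (j : ℕ)))


open Polynomial Matrix Complex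

open Polynomial Matrix Complex

/-- Structure lemma: the discrete Wronskian-type determinant of quasi-exponentials
is `exp (x * Σ β i)` times a polynomial in `x`. -/
lemma expPolyDet {n : ℕ} (β : Fin n → ℂ) (p : Fin n → Polynomial ℂ) :
    ∃ P : Polynomial ℂ, ∀ x : ℂ,
      Matrix.det (Matrix.of fun i j : Fin n =>
        Complex.exp ((x + (j : ℕ)) * β i) * (p i).eval (x + (j : ℕ)))
      = Complex.exp (x * ∑ i, β i) * P.eval x := by
  refine ⟨Matrix.det (Matrix.of fun i j : Fin n =>
      (C (Complex.exp (β i)))^(j : ℕ) * ((p i).comp (X + C ((j : ℕ) : ℂ)))), fun x => ?_⟩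
  have hev : (Polynomial.eval x) (Matrix.det (Matrix.of fun i j : Fin n =>
      (C (Complex.exp (β i)))^(j : ℕ) * ((p i).comp (X + C ((j : ℕ) : ℂ)))))
      = Matrix.det (Matrix.of fun i j : Fin n =>
        (Complex.exp (β i))^(j : ℕ) * (p i).eval (x + (j : ℕ))) := by
    rw [← Polynomial.coe_evalRingHom, RingHom.map_det]
    congr 1
    ext i j
    simp [Matrix.map_apply, Polynomial.eval_comp]
  rw [hev]
  have : (Matrix.of fun i j : Fin n =>
      Complex.exp ((x + (j : ℕ)) * β i) * (p i).eval (x + (j : ℕ)))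
      = Matrix.of (fun i j : Fin n => Complex.exp (x * β i) *
        ((Complex.exp (β i))^(j : ℕ) * (p i).eval (x + (j : ℕ)))) := by
    ext i j
    have : (x + (j : ℕ)) * β i = x * β i + (j : ℕ) * β i := by ring
    rw [Matrix.of_apply, Matrix.of_apply, this, Complex.exp_add, Complex.exp_nat_mul]
    ring
  have hdm := Matrix.det_mul_column (fun i => Complex.exp (x * β i))
    (Matrix.of fun i j : Fin n => (Complex.exp (β i))^(j : ℕ) * (p i).eval (x + (j : ℕ)))
  simp only [Matrix.of_apply] at hdm
  rw [this, hdm]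
  congr 1
  rw [← Complex.exp_sum]
  congr 1
  rw [Finset.mul_sum]

/-- A point beyond all roots of `W`: `W.eval (x₀ + n) ≠ 0` for all `n : ℕ`. -/
lemma exists_beyond_roots (W : Polynomial ℂ) (hW : W ≠ 0) :
    ∃ x₀ : ℂ, ∀ n : ℕ, W.eval (x₀ + n) ≠ 0 := by
  have hfin : {x : ℂ | W.IsRoot x}.Finite := Polynomial.finite_setOf_isRoot hW
  obtain ⟨b, hb⟩ := (hfin.image (fun z : ℂ => z.re)).bddAbove
  refine ⟨(b + 1 : ℝ), fun n h => ?_⟩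
  have hmem : ((b + 1 : ℝ) + (n : ℂ)).re ∈ (fun z : ℂ => z.re) '' {x : ℂ | W.IsRoot x} :=
    ⟨(b + 1 : ℝ) + n, h, rfl⟩
  have hle := hb hmem
  simp [Complex.add_re] at hle
  linarith [Nat.cast_nonneg (α := ℝ) n]

/-- If `Q(x+1) W(x) = Q(x) W(x+1)` as polynomials and `W ≠ 0`, then `Q = c • W`. -/
lemma ratio_const (Q W : Polynomial ℂ) (hW : W ≠ 0)
    (h : Q.comp (X + C 1) * W = Q * (W.comp (X + C 1))) :
    ∃ c : ℂ, Q = C c * W := by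
  obtain ⟨x₀, hx₀⟩ := exists_beyond_roots W hW
  have key : ∀ n : ℕ, Q.eval (x₀ + n) * W.eval x₀ = Q.eval x₀ * W.eval (x₀ + n) := by
    intro n
    induction n with
    | zero => simp [mul_comm]
    | succ n ih =>
      have hid : Q.eval (x₀ + n + 1) * W.eval (x₀ + n)
          = Q.eval (x₀ + n) * W.eval (x₀ + n + 1) := by
        have h2 := congrArg (Polynomial.eval (x₀ + n)) h
        simpa [Polynomial.eval_comp] using h2
      have hWn := hx₀ n
      have e1 : (x₀ + (n + 1 : ℕ) : ℂ) = x₀ + n + 1 := by push_cast; ring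
      rw [e1]
      refine mul_right_cancel₀ hWn ?_
      calc Q.eval (x₀ + n + 1) * W.eval x₀ * W.eval (x₀ + n)
          = Q.eval (x₀ + n + 1) * W.eval (x₀ + n) * W.eval x₀ := by ring
        _ = Q.eval (x₀ + n) * W.eval (x₀ + n + 1) * W.eval x₀ := by rw [hid]
        _ = (Q.eval (x₀ + n) * W.eval x₀) * W.eval (x₀ + n + 1) := by ring
        _ = (Q.eval x₀ * W.eval (x₀ + n)) * W.eval (x₀ + n + 1) := by rw [ih]
        _ = Q.eval x₀ * W.eval (x₀ + n + 1) * W.eval (x₀ + n) := by ring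
  have hW0 : W.eval x₀ ≠ 0 := by simpa using hx₀ 0
  have hmain : Q * C (W.eval x₀) = C (Q.eval x₀) * W := by
    apply Polynomial.eq_of_infinite_eval_eq
    apply Set.Infinite.mono (s := Set.range (fun n : ℕ => x₀ + (n : ℂ)))
    · rintro _ ⟨n, rfl⟩
      simp only [Set.mem_setOf_eq, Polynomial.eval_mul, Polynomial.eval_C]
      exact key n
    · apply Set.infinite_range_of_injective
      intro a b hab
      simpa using hab
  refine ⟨Q.eval x₀ / W.eval x₀, ?_⟩
  calc Q = Q * (C (W.eval x₀) * C (W.eval x₀)⁻¹) := by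
        rw [← C_mul, mul_inv_cancel₀ hW0]; simp
    _ = (C (Q.eval x₀) * W) * C (W.eval x₀)⁻¹ := by rw [← mul_assoc, hmain]
    _ = C (Q.eval x₀ / W.eval x₀) * W := by rw [div_eq_mul_inv, C_mul]; ring

lemma dWr_rep {n : ℕ} (g : Fin n → ℂ → ℂ) (β : Fin n → ℂ) (p : Fin n → Polynomial ℂ)
    (hgf : ∀ i x, g i x = Complex.exp (x * β i) * (p i).eval x) :
    ∃ P : Polynomial ℂ, ∀ x, dWr g x = Complex.exp (x * ∑ i, β i) * P.eval x := by
  obtain ⟨P, hP⟩ := expPolyDet β p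
  refine ⟨P, fun x => ?_⟩
  rw [dWr, ← hP x]
  congr 1
  ext i j
  rw [Matrix.of_apply, Matrix.of_apply, hgf]

/-- Cancel on the right a matrix with nonzero determinant. -/
lemma vecMul_cancel {n : ℕ} {M : Matrix (Fin n) (Fin n) ℂ} (hM : M.det ≠ 0)
    {u w : Fin n → ℂ} (h : Matrix.vecMul u M = Matrix.vecMul w M) : u = w := by
  have hu : IsUnit M.det := isUnit_iff_ne_zero.2 hM
  have h2 := congrArg (fun v => Matrix.vecMul v M⁻¹) h
  simpa [Matrix.vecMul_vecMul, Matrix.mul_nonsing_inv M hu] using h2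

lemma key : ∀ (m : ℕ) (g : Fin m → ℂ → ℂ) (β : Fin m → ℂ) (p : Fin m → Polynomial ℂ),
    (∀ i j, Complex.exp (β i) = Complex.exp (β j) → β i = β j) →
    (∀ i x, g i x = Complex.exp (x * β i) * (p i).eval x) →
    (∀ x, dWr g x = 0) → ¬ LinearIndependent ℂ g := by
  intro m
  induction m with
  | zero =>
    intro g β p hβ hgf H _
    have h0 := H 0
    rw [dWr, Matrix.det_isEmpty] at h0
    exact one_ne_zero h0
  | succ m ih =>
    intro g β p hβ hgf H hind
    -- the truncated family
    set g' : Fin m → ℂ → ℂ := g ∘ Fin.castSucc with hg'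
    have hind' : LinearIndependent ℂ g' := hind.comp _ (Fin.castSucc_injective m)
    have hne : ∃ x₀, dWr g' x₀ ≠ 0 := by
      by_contra hcon
      push_neg at hcon
      exact ih g' (β ∘ Fin.castSucc) (p ∘ Fin.castSucc)
        (fun i j h => hβ _ _ h) (fun i x => hgf _ x) hcon hind'
    obtain ⟨x₀, hx₀⟩ := hne
    set c : ℂ := ∑ i : Fin m, β (Fin.castSucc i) with hc
    obtain ⟨W, hWf⟩ := dWr_rep g' (β ∘ Fin.castSucc) (p ∘ Fin.castSucc)
      (fun i x => hgf _ x)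
    have hWne : W ≠ 0 := by
      intro h0
      apply hx₀
      rw [hWf, h0]
      simp
    -- the m×m matrix and the coefficient vector
    set B : ℂ → Matrix (Fin m) (Fin m) ℂ :=
      fun x => Matrix.of fun k j : Fin m => g (Fin.castSucc k) (x + (j : ℕ)) with hB
    have hBdet : ∀ x, (B x).det = Complex.exp (x * c) * W.eval x := fun x => hWf x
    have hBne : ∀ x : ℂ, W.eval x ≠ 0 → (B x).det ≠ 0 := by
      intro x hx
      rw [hBdet]
      exact mul_ne_zero (Complex.exp_ne_zero _) hx
    set v : ℂ → Fin m → ℂ := fun x j => g (Fin.last m) (x + (j : ℕ)) with hv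
    set Λ : ℂ → Fin m → ℂ := fun x => Matrix.vecMul (v x) (B x)⁻¹ with hΛ
    have hΛB : ∀ x : ℂ, W.eval x ≠ 0 → Matrix.vecMul (Λ x) (B x) = v x := by
      intro x hx
      have hu : IsUnit (B x).det := isUnit_iff_ne_zero.2 (hBne x hx)
      rw [hΛ]
      simp only
      rw [Matrix.vecMul_vecMul, Matrix.nonsing_inv_mul (B x) hu, Matrix.vecMul_one]
    -- the full (m+1)-column relation
    have hfull : ∀ x : ℂ, W.eval x ≠ 0 → ∀ j : Fin (m+1),
        (∑ k : Fin m, Λ x k * g (Fin.castSucc k) (x + (j : ℕ))) = g (Fin.last m) (x + (j : ℕ)) := by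
      intro x hx
      set A : Matrix (Fin (m+1)) (Fin (m+1)) ℂ :=
        Matrix.of fun i j : Fin (m+1) => g i (x + (j : ℕ)) with hA
      have hdetA : A.det = 0 := H x
      obtain ⟨u, hune, huA⟩ := Matrix.exists_vecMul_eq_zero_iff.mpr hdetA
      have hulast : u (Fin.last m) ≠ 0 := by
        intro h0
        have hub : Matrix.vecMul (u ∘ Fin.castSucc) (B x) = Matrix.vecMul 0 (B x) := by
          funext j
          have hsum : ∑ i : Fin (m+1), u i * A i (Fin.castSucc j) = 0 := by
            have := congrFun huA (Fin.castSucc j)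
            simpa [Matrix.vecMul, dotProduct] using this
          rw [Fin.sum_univ_castSucc, h0, zero_mul, add_zero] at hsum
          simp only [Matrix.zero_vecMul, Pi.zero_apply]
          simp only [Matrix.vecMul, dotProduct, hB, Matrix.of_apply, Function.comp_apply]
          simpa [hA, Matrix.of_apply, Fin.coe_castSucc] using hsum
        have hcs : u ∘ Fin.castSucc = 0 := vecMul_cancel (hBne x hx) hub
        apply hune
        funext i
        refine Fin.lastCases ?_ (fun k => ?_) i
        · exact h0
        · exact congrFun hcs k
      have hl0 : ∀ j : Fin (m+1),
          ∑ k : Fin m, (-(u (Fin.castSucc k)) / u (Fin.last m)) * g (Fin.castSucc k) (x + (j:ℕ))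
            = g (Fin.last m) (x + (j:ℕ)) := by
        intro j
        have hsum : ∑ i : Fin (m+1), u i * g i (x + (j:ℕ)) = 0 := by
          have := congrFun huA j
          simpa [Matrix.vecMul, dotProduct, hA] using this
        rw [Fin.sum_univ_castSucc] at hsum
        have h2 : ∑ k : Fin m, u (Fin.castSucc k) * g (Fin.castSucc k) (x+(j:ℕ))
            = - (u (Fin.last m) * g (Fin.last m) (x+(j:ℕ))) := by
          linear_combination hsum
        have h3 : ∑ k : Fin m, (-(u (Fin.castSucc k)) / u (Fin.last m)) * g (Fin.castSucc k) (x + (j:ℕ))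
            = (-(1 / u (Fin.last m))) * ∑ k : Fin m, u (Fin.castSucc k) * g (Fin.castSucc k) (x + (j:ℕ)) := by
          rw [Finset.mul_sum]
          refine Finset.sum_congr rfl fun k _ => ?_
          field_simp
        rw [h3, h2]
        field_simp
      have hleq : (fun k => -(u (Fin.castSucc k)) / u (Fin.last m)) = Λ x := by
        refine vecMul_cancel (hBne x hx) ?_
        rw [hΛB x hx]
        funext j
        simp only [Matrix.vecMul, dotProduct, hB, Matrix.of_apply, hv]
        simpa [Fin.coe_castSucc] using hl0 (Fin.castSucc j)
      intro j
      rw [← hleq]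
      exact hl0 j
    -- periodicity
    have hper : ∀ x : ℂ, W.eval x ≠ 0 → W.eval (x+1) ≠ 0 → Λ (x+1) = Λ x := by
      intro x hx hx1
      refine vecMul_cancel (hBne (x+1) hx1) ?_
      rw [hΛB (x+1) hx1]
      funext j
      have hco : x + ((j.succ : Fin (m+1)) : ℕ) = (x + 1) + (j:ℕ) := by
        rw [Fin.val_succ]
        push_cast
        ring
      have h1 := hfull x hx j.succ
      rw [hco] at h1
      simp only [Matrix.vecMul, dotProduct, hB, Matrix.of_apply, hv]
      exact h1.symm
    -- Cramer's rule
    have hcram : ∀ (k : Fin m) (x : ℂ), W.eval x ≠ 0 →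
        (B x).det * Λ x k = dWr (Function.update g' k (g (Fin.last m))) x := by
      intro k x hx
      have hmv : Matrix.mulVec (B x)ᵀ (Λ x) = v x := by
        rw [Matrix.mulVec_transpose]
        exact hΛB x hx
      have hadj : (B x).det • Λ x = Matrix.cramer (B x)ᵀ (v x) := by
        rw [Matrix.cramer_eq_adjugate_mulVec, ← hmv, Matrix.mulVec_mulVec,
          Matrix.adjugate_mul, Matrix.det_transpose, Matrix.smul_mulVec,
          Matrix.one_mulVec]
      have hcomp := congrFun hadj k
      rw [Pi.smul_apply, smul_eq_mul] at hcomp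
      rw [hcomp, Matrix.cramer_apply]
      have hmat : (B x)ᵀ.updateCol k (v x) = ((B x).updateRow k (v x))ᵀ := by
        ext i j
        rw [Matrix.transpose_apply, Matrix.updateCol_apply, Matrix.updateRow_apply,
          Matrix.transpose_apply]
      rw [hmat, Matrix.det_transpose]
      have hmat2 : (B x).updateRow k (v x)
          = Matrix.of fun i j : Fin m => (Function.update g' k (g (Fin.last m))) i (x + (j:ℕ)) := by
        ext i j
        rw [Matrix.updateRow_apply, Matrix.of_apply]
        by_cases h : i = k
        · subst h
          simp [hv, Function.update_self]
        · simp [h, hB, hg', Function.update_of_ne h]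
      rw [hmat2]
      rfl
    -- each Λ · k is constant on the good set
    have hconst : ∀ k : Fin m, ∃ cst : ℂ, ∀ x : ℂ, W.eval x ≠ 0 → Λ x k = cst := by
      intro k
      obtain ⟨Q, hQf⟩ := dWr_rep (Function.update g' k (g (Fin.last m)))
        (Function.update (β ∘ Fin.castSucc) k (β (Fin.last m)))
        (Function.update (p ∘ Fin.castSucc) k (p (Fin.last m)))
        (fun i x => by
          by_cases h : i = k
          · subst h
            simp only [Function.update_self]
            exact hgf (Fin.last m) x
          · simp only [Function.update_of_ne h, Function.comp_apply, hg']
            exact hgf (Fin.castSucc i) x)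
      set γ : ℂ := β (Fin.last m) - β (Fin.castSucc k) with hγ
      have hsumupd : ∑ i : Fin m, Function.update (β ∘ Fin.castSucc) k (β (Fin.last m)) i
          = γ + c := by
        rw [Finset.sum_update_of_mem (Finset.mem_univ k), Finset.sdiff_singleton_eq_erase,
          Finset.sum_erase_eq_sub (Finset.mem_univ k)]
        simp only [Function.comp_apply]
        rw [hγ, hc]
        ring
      have hkey : ∀ x : ℂ, W.eval x ≠ 0 →
          W.eval x * Λ x k = Complex.exp (x * γ) * Q.eval x := by
        intro x hx
        have h1 := hcram k x hx
        rw [hBdet, hQf, hsumupd] at h1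
        have hexp : Complex.exp (x * (γ + c))
            = Complex.exp (x * γ) * Complex.exp (x * c) := by
          rw [← Complex.exp_add]
          ring_nf
        rw [hexp] at h1
        apply mul_left_cancel₀ (Complex.exp_ne_zero (x * c))
        calc Complex.exp (x*c) * (W.eval x * Λ x k)
            = Complex.exp (x*c) * W.eval x * Λ x k := by ring
          _ = Complex.exp (x*γ) * Complex.exp (x*c) * Q.eval x := h1
          _ = Complex.exp (x*c) * (Complex.exp (x*γ) * Q.eval x) := by ring
      have hS : ∀ x : ℂ, W.eval x ≠ 0 → W.eval (x+1) ≠ 0 →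
          Complex.exp γ * Q.eval (x+1) * W.eval x = Q.eval x * W.eval (x+1) := by
        intro x hx hx1
        have e1 := hkey (x+1) hx1
        rw [hper x hx hx1] at e1
        have e2 := hkey x hx
        have hexp1 : Complex.exp ((x+1) * γ)
            = Complex.exp (x * γ) * Complex.exp γ := by
          rw [← Complex.exp_add]
          ring_nf
        rw [hexp1] at e1
        apply mul_left_cancel₀ (Complex.exp_ne_zero (x * γ))
        linear_combination (W.eval (x+1)) * e2 - (W.eval x) * e1
      have hinf : Set.Infinite {x : ℂ | W.eval x ≠ 0 ∧ W.eval (x+1) ≠ 0} := by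
        have h1 : {x : ℂ | W.eval x = 0}.Finite := by
          have := Polynomial.finite_setOf_isRoot hWne
          simpa [Polynomial.IsRoot] using this
        have h2 : {x : ℂ | W.eval (x+1) = 0}.Finite := by
          have : {x : ℂ | W.eval (x+1) = 0} ⊆ (fun x : ℂ => x + 1) ⁻¹' {x : ℂ | W.eval x = 0} := by
            intro x hx
            exact hx
          exact (h1.preimage (Set.injOn_of_injective (add_left_injective 1))).subset this
        have h3 := Set.Finite.infinite_compl (h1.union h2)
        apply h3.mono
        intro x hx
        simp only [Set.mem_compl_iff, Set.mem_union, Set.mem_setOf_eq, not_or] at hx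
        exact ⟨hx.1, hx.2⟩
      have hpoly : C (Complex.exp γ) * (Q.comp (X + C 1)) * W = Q * (W.comp (X + C 1)) := by
        apply Polynomial.eq_of_infinite_eval_eq
        apply hinf.mono
        rintro x ⟨hx, hx1⟩
        simp only [Set.mem_setOf_eq, Polynomial.eval_mul, Polynomial.eval_C,
          Polynomial.eval_comp, Polynomial.eval_add, Polynomial.eval_X, Polynomial.eval_one]
        exact hS x hx hx1
      by_cases hQ0 : Q = 0
      · refine ⟨0, fun x hx => ?_⟩
        have h1 := hkey x hx
        rw [hQ0] at h1
        simp only [Polynomial.eval_zero, mul_zero] at h1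
        exact (mul_eq_zero.mp h1).resolve_left hx
      · have hlcW : W.leadingCoeff ≠ 0 := Polynomial.leadingCoeff_ne_zero.mpr hWne
        have hlcQ : Q.leadingCoeff ≠ 0 := Polynomial.leadingCoeff_ne_zero.mpr hQ0
        have hndeg : (X + C (1:ℂ)).natDegree ≠ 0 := by
          rw [Polynomial.natDegree_X_add_C]
          norm_num
        have hlcomp : (Q.comp (X + C (1:ℂ))).leadingCoeff = Q.leadingCoeff := by
          rw [Polynomial.leadingCoeff_comp hndeg, Polynomial.leadingCoeff_X_add_C, one_pow, mul_one]
        have hlcompW : (W.comp (X + C (1:ℂ))).leadingCoeff = W.leadingCoeff := by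
          rw [Polynomial.leadingCoeff_comp hndeg, Polynomial.leadingCoeff_X_add_C, one_pow, mul_one]
        have hlc : Complex.exp γ = 1 := by
          have h1 := congrArg Polynomial.leadingCoeff hpoly
          rw [Polynomial.leadingCoeff_mul, Polynomial.leadingCoeff_mul,
            Polynomial.leadingCoeff_mul, Polynomial.leadingCoeff_C,
            hlcomp, hlcompW] at h1
          have h2 : Complex.exp γ * (Q.leadingCoeff * W.leadingCoeff)
              = 1 * (Q.leadingCoeff * W.leadingCoeff) := by
            rw [one_mul]
            calc Complex.exp γ * (Q.leadingCoeff * W.leadingCoeff)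
                = Complex.exp γ * Q.leadingCoeff * W.leadingCoeff := by ring
              _ = Q.leadingCoeff * W.leadingCoeff := h1
          exact mul_right_cancel₀ (mul_ne_zero hlcQ hlcW) h2
        have hγ0 : γ = 0 := by
          have hee : Complex.exp (β (Fin.last m)) = Complex.exp (β (Fin.castSucc k)) := by
            rw [hγ, Complex.exp_sub] at hlc
            rw [div_eq_one_iff_eq (Complex.exp_ne_zero _)] at hlc
            exact hlc
          rw [hγ, hβ _ _ hee, sub_self]
        have hpoly' : Q.comp (X + C 1) * W = Q * (W.comp (X + C 1)) := by
          rw [hγ0] at hpoly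
          simpa using hpoly
        obtain ⟨cst, hcst⟩ := ratio_const Q W hWne hpoly'
        refine ⟨cst, fun x hx => ?_⟩
        have h1 := hkey x hx
        rw [hγ0, hcst] at h1
        simp only [mul_zero, Complex.exp_zero, one_mul, Polynomial.eval_mul,
          Polynomial.eval_C] at h1
        apply mul_left_cancel₀ hx
        rw [h1]
        ring
    choose cc hcc using hconst
    -- final relation on the good set
    have hrel : ∀ x : ℂ, W.eval x ≠ 0 →
        g (Fin.last m) x = ∑ k : Fin m, cc k * g (Fin.castSucc k) x := by
      intro x hx
      have h0 := hfull x hx 0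
      simp only [Fin.val_zero, Nat.cast_zero, add_zero] at h0
      rw [← h0]
      exact Finset.sum_congr rfl fun k _ => by rw [hcc k x hx]
    -- upgrade to all of ℂ by continuity
    have hrelAll : ∀ x : ℂ, g (Fin.last m) x = ∑ k : Fin m, cc k * g (Fin.castSucc k) x := by
      have hgc : ∀ i, Continuous (g i) := by
        intro i
        have hgi : g i = fun x => Complex.exp (x * β i) * (p i).eval x := funext (hgf i)
        rw [hgi]
        exact (Complex.continuous_exp.comp (continuous_id.mul continuous_const)).mul
          (p i).continuous
      have hfc : Continuous (fun x => g (Fin.last m) x - ∑ k : Fin m, cc k * g (Fin.castSucc k) x) :=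
        (hgc _).sub (continuous_finset_sum _ fun k _ => continuous_const.mul (hgc _))
      have hdense : Dense {x : ℂ | W.eval x ≠ 0} := by
        have h1 : {x : ℂ | W.eval x = 0}.Countable := by
          have := Polynomial.finite_setOf_isRoot hWne
          exact Set.Finite.countable (by simpa [Polynomial.IsRoot] using this)
        have h2 := Set.Countable.dense_compl ℂ h1
        have h3 : {x : ℂ | W.eval x = 0}ᶜ = {x : ℂ | W.eval x ≠ 0} := by
          ext y
          simp
        rwa [h3] at h2
      have hEq : (fun x => g (Fin.last m) x - ∑ k : Fin m, cc k * g (Fin.castSucc k) x)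
          = (fun _ => (0:ℂ)) := by
        apply Continuous.ext_on hdense hfc continuous_const
        intro x hx
        simp only [Set.mem_setOf_eq] at hx
        show g (Fin.last m) x - ∑ k : Fin m, cc k * g (Fin.castSucc k) x = 0
        rw [hrel x hx]
        ring
      intro x
      have := congrFun hEq x
      linear_combination this
    -- contradiction with linear independence
    set cvec : Fin (m+1) → ℂ := Fin.snoc (fun k => cc k) (-1 : ℂ) with hcvec
    have hlin := Fintype.linearIndependent_iff.mp hind cvec
    have hzero : ∑ i : Fin (m+1), cvec i • g i = 0 := by
      funext x
      rw [Finset.sum_apply]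
      rw [Fin.sum_univ_castSucc]
      simp only [hcvec, Fin.snoc_castSucc, Fin.snoc_last, Pi.smul_apply, smul_eq_mul]
      rw [hrelAll x]
      simp only [Pi.zero_apply]
      ring
    have := hlin hzero (Fin.last m)
    rw [hcvec, Fin.snoc_last] at this
    exact absurd this (by norm_num)

/-- If `g₁,…,gₘ` are quasi-exponentials, i.e. each `gᵢ(x) = αᵢˣ pᵢ(x)` with
`αᵢ ∈ ℂ*` and `pᵢ` a polynomial (where `αˣ = exp(x log α)`), then the discrete Wronskian
`Wr(g₁,…,gₘ)` vanishes identically if and only if `g₁,…,gₘ` are linearly dependent over `ℂ`. -/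
theorem stmt3 {m : ℕ} (g : Fin m → ℂ → ℂ)
    (hg : ∀ i, ∃ (α : ℂ) (p : Polynomial ℂ), α ≠ 0 ∧
      ∀ x : ℂ, g i x = Complex.exp (x * Complex.log α) * p.eval x) :
    (∀ x : ℂ, dWr g x = 0) ↔ ¬ LinearIndependent ℂ g := by
  constructor
  · intro H
    choose α p hα hp using hg
    refine key m g (fun i => Complex.log (α i)) p ?_ (fun i x => hp i x) H
    intro i j h
    rw [Complex.exp_log (hα i), Complex.exp_log (hα j)] at h
    simp only [h]
  · intro hdep x
    rw [Fintype.not_linearIndependent_iff] at hdep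
    obtain ⟨cv, hsum, i, hi⟩ := hdep
    apply Matrix.exists_vecMul_eq_zero_iff.mp
    refine ⟨cv, fun h0 => hi (by rw [h0]; rfl), ?_⟩
    funext j
    have := congrFun hsum (x + (j : ℕ))
    simp only [Finset.sum_apply, Pi.smul_apply, smul_eq_mul, Pi.zero_apply] at this
    simpa [Matrix.vecMul, dotProduct] using this
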